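/- Let ν₀ ≥ ν₁ ≥ 0. Let M₀ be a bounded linear causal operator on L²_{ν₀}(ℝ;H) and M₁ a bounded linear causal operator on L²_{ν₁}(ℝ;H). Suppose D is a set of measurable functions f : ℝ → H belonging to both L²_{ν₀}(ℝ;H) and L²_{ν₁}(ℝ;H), dense in L²_{ν₀}(ℝ;H), such that M₀ f = M₁ f almost everywhere for every f ∈ D. Then for every measurable f : ℝ → H belonging to both L²_{ν₀}(ℝ;H) and L²_{ν₁}(ℝ;H), one has M₀ f = M₁ f almost everywhere. -/

import Mathlib

open MeasureTheory Filter
open scoped ENNReal NNReal Topology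

/-- The exponentially weighted measure `exp(-2νt) dt` on `ℝ`. -/
noncomputable def wMeasure (ν : ℝ) : Measure ℝ :=
  volume.withDensity fun t => ENNReal.ofReal (Real.exp (-2 * ν * t))

/-- Multiplication by the indicator function of `(-∞, a]` on `L²_ν(ℝ; H)`. -/
noncomputable def trunc {H : Type*} [NormedAddCommGroup H] (ν a : ℝ)
    (f : Lp H 2 (wMeasure ν)) : Lp H 2 (wMeasure ν) :=
  MemLp.toLp (Set.indicator (Set.Iic a) f) ((Lp.memLp f).indicator measurableSet_Iic)

section helpers

lemma wDensity_meas (ν : ℝ) :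
    Measurable fun t : ℝ => ENNReal.ofReal (Real.exp (-2 * ν * t)) :=
  (Real.continuous_exp.comp (continuous_const.mul continuous_id)).measurable.ennreal_ofReal

lemma wMeasure_ac (ν : ℝ) : wMeasure ν ≪ (volume : Measure ℝ) :=
  withDensity_absolutelyContinuous _ _

lemma volume_ac (ν : ℝ) : (volume : Measure ℝ) ≪ wMeasure ν :=
  withDensity_absolutelyContinuous' (wDensity_meas ν).aemeasurable
    (ae_of_all _ fun t => by
      simp only [ne_eq, ENNReal.ofReal_eq_zero, not_le]
      exact Real.exp_pos _)

variable {H : Type*} [NormedAddCommGroup H]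

lemma coeFn_trunc (ν a : ℝ) (f : Lp H 2 (wMeasure ν)) :
    ⇑(trunc ν a f) =ᵐ[wMeasure ν] (Set.Iic a).indicator ⇑f :=
  MemLp.coeFn_toLp _

lemma coeFn_trunc_vol (ν a : ℝ) (f : Lp H 2 (wMeasure ν)) :
    ⇑(trunc ν a f) =ᵐ[volume] (Set.Iic a).indicator ⇑f :=
  (volume_ac ν).ae_eq (coeFn_trunc ν a f)

lemma trunc_toLp (ν a : ℝ) {f : ℝ → H} (hf : MemLp f 2 (wMeasure ν)) :
    trunc ν a (hf.toLp f)
      = MemLp.toLp ((Set.Iic a).indicator f) (hf.indicator measurableSet_Iic) := by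
  refine MemLp.toLp_congr _ _ ?_
  filter_upwards [hf.coeFn_toLp] with t ht
  by_cases h : t ∈ Set.Iic a <;> simp [Set.indicator_apply, h, ht]

lemma trunc_sub (ν a : ℝ) (f g : Lp H 2 (wMeasure ν)) :
    trunc ν a (f - g) = trunc ν a f - trunc ν a g := by
  apply Lp.ext (p := (2 : ℝ≥0∞)) (μ := wMeasure ν)
  filter_upwards [coeFn_trunc ν a (f - g), coeFn_trunc ν a f, coeFn_trunc ν a g,
    Lp.coeFn_sub f g, Lp.coeFn_sub (trunc ν a f) (trunc ν a g)] with t h1 h2 h3 h4 h5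
  rw [h1, h5, Pi.sub_apply, h2, h3]
  by_cases h : t ∈ Set.Iic a
  · rw [Set.indicator_of_mem h, Set.indicator_of_mem h, Set.indicator_of_mem h, h4,
      Pi.sub_apply]
  · rw [Set.indicator_of_notMem h, Set.indicator_of_notMem h, Set.indicator_of_notMem h,
      sub_zero]

lemma trunc_trunc (ν a : ℝ) (f : Lp H 2 (wMeasure ν)) :
    trunc ν a (trunc ν a f) = trunc ν a f := by
  apply Lp.ext (p := (2 : ℝ≥0∞)) (μ := wMeasure ν)
  filter_upwards [coeFn_trunc ν a (trunc ν a f), coeFn_trunc ν a f] with t h1 h2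
  rw [h1]
  by_cases h : t ∈ Set.Iic a <;> simp [Set.indicator_apply, h, h2]

lemma norm_trunc_le (ν a : ℝ) (f : Lp H 2 (wMeasure ν)) : ‖trunc ν a f‖ ≤ ‖f‖ := by
  rw [Lp.norm_def, Lp.norm_def]
  refine ENNReal.toReal_mono (Lp.eLpNorm_ne_top f) ?_
  rw [eLpNorm_congr_ae (coeFn_trunc ν a f)]
  exact eLpNorm_indicator_le _

lemma trunc_lipschitz (ν a : ℝ) :
    LipschitzWith 1 (fun f : Lp H 2 (wMeasure ν) => trunc ν a f) := by
  refine LipschitzWith.of_dist_le_mul fun f g => ?_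
  rw [NNReal.coe_one, one_mul, dist_eq_norm, dist_eq_norm, ← trunc_sub]
  exact norm_trunc_le ν a _

lemma trunc_continuous (ν a : ℝ) :
    Continuous (fun f : Lp H 2 (wMeasure ν) => trunc ν a f) :=
  (trunc_lipschitz ν a).continuous

lemma trunc_causal_eq [NormedSpace ℂ H] (ν a : ℝ)
    (M : Lp H 2 (wMeasure ν) →L[ℂ] Lp H 2 (wMeasure ν))
    (hM : ∀ (f : Lp H 2 (wMeasure ν)), trunc ν a f = 0 → trunc ν a (M f) = 0)
    (x : Lp H 2 (wMeasure ν)) :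
    trunc ν a (M x) = trunc ν a (M (trunc ν a x)) := by
  have h0 : trunc ν a (x - trunc ν a x) = 0 := by
    rw [trunc_sub, trunc_trunc, sub_self]
  have h1 := hM _ h0
  rw [map_sub, trunc_sub, sub_eq_zero] at h1
  exact h1

end helpers

section cross

variable {H : Type*} [NormedAddCommGroup H]

lemma wMeasure_restrict_le (ν₀ ν₁ a : ℝ) (h01 : ν₁ ≤ ν₀) :
    (wMeasure ν₁).restrict (Set.Iic a)
      ≤ (ENNReal.ofReal (Real.exp (2 * (ν₀ - ν₁) * a))) • wMeasure ν₀ := by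
  unfold wMeasure
  rw [restrict_withDensity measurableSet_Iic,
    ← withDensity_smul _ (wDensity_meas ν₀)]
  calc (volume.restrict (Set.Iic a)).withDensity
        (fun t => ENNReal.ofReal (Real.exp (-2 * ν₁ * t)))
      ≤ (volume.restrict (Set.Iic a)).withDensity
        ((ENNReal.ofReal (Real.exp (2 * (ν₀ - ν₁) * a)))
          • fun t => ENNReal.ofReal (Real.exp (-2 * ν₀ * t))) := by
        refine withDensity_mono ?_
        refine (ae_restrict_iff' measurableSet_Iic).mpr (ae_of_all _ fun t ht => ?_)
        simp only [Pi.smul_apply, smul_eq_mul]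
        rw [← ENNReal.ofReal_mul (Real.exp_nonneg _), ← Real.exp_add]
        refine ENNReal.ofReal_le_ofReal (Real.exp_le_exp.mpr ?_)
        have : (ν₀ - ν₁) * t ≤ (ν₀ - ν₁) * a :=
          mul_le_mul_of_nonneg_left ht (sub_nonneg.mpr h01)
        nlinarith
    _ = ((volume.withDensity
        ((ENNReal.ofReal (Real.exp (2 * (ν₀ - ν₁) * a)))
          • fun t => ENNReal.ofReal (Real.exp (-2 * ν₀ * t))))).restrict (Set.Iic a) :=
        (restrict_withDensity measurableSet_Iic _).symm
    _ ≤ _ := Measure.restrict_le_self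

lemma cross_bound (ν₀ ν₁ a : ℝ) (h01 : ν₁ ≤ ν₀) (g : ℝ → H) :
    eLpNorm ((Set.Iic a).indicator g) 2 (wMeasure ν₁)
      ≤ (ENNReal.ofReal (Real.exp (2 * (ν₀ - ν₁) * a))) ^ (1 / (2:ℝ≥0∞)).toReal
        * eLpNorm g 2 (wMeasure ν₀) := by
  calc eLpNorm ((Set.Iic a).indicator g) 2 (wMeasure ν₁)
      = eLpNorm g 2 ((wMeasure ν₁).restrict (Set.Iic a)) :=
        eLpNorm_indicator_eq_eLpNorm_restrict measurableSet_Iic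
    _ ≤ eLpNorm g 2 ((ENNReal.ofReal (Real.exp (2 * (ν₀ - ν₁) * a))) • wMeasure ν₀) :=
        eLpNorm_mono_measure _ (wMeasure_restrict_le ν₀ ν₁ a h01)
    _ = _ := by
        rw [eLpNorm_smul_measure_of_ne_top (by norm_num)]
        rfl

end cross

/-- Two bounded causal operators on `L²_{ν₀}` and `L²_{ν₁}` that agree
on a set `D` of functions, dense in `L²_{ν₀}`, agree on every function belonging to both
spaces. -/
theorem stmt13
    {H : Type*} [NormedAddCommGroup H] [InnerProductSpace ℂ H] [CompleteSpace H]
    (ν₀ ν₁ : ℝ) (hν₁ : 0 ≤ ν₁) (hν₀₁ : ν₁ ≤ ν₀)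
    (M₀ : Lp H 2 (wMeasure ν₀) →L[ℂ] Lp H 2 (wMeasure ν₀))
    (M₁ : Lp H 2 (wMeasure ν₁) →L[ℂ] Lp H 2 (wMeasure ν₁))
    (hM₀causal : ∀ (a : ℝ) (f : Lp H 2 (wMeasure ν₀)),
      trunc ν₀ a f = 0 → trunc ν₀ a (M₀ f) = 0)
    (hM₁causal : ∀ (a : ℝ) (f : Lp H 2 (wMeasure ν₁)),
      trunc ν₁ a f = 0 → trunc ν₁ a (M₁ f) = 0)
    (D : Set (ℝ → H))
    (hD : ∀ f ∈ D, MemLp f 2 (wMeasure ν₀) ∧ MemLp f 2 (wMeasure ν₁))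
    (hdense : Dense {g : Lp H 2 (wMeasure ν₀) | ∃ (f : ℝ → H) (hf : f ∈ D),
      g = MemLp.toLp f (hD f hf).1})
    (hagree : ∀ (f : ℝ → H) (hf : f ∈ D),
      ⇑(M₀ (MemLp.toLp f (hD f hf).1)) =ᵐ[volume] ⇑(M₁ (MemLp.toLp f (hD f hf).2))) :
    ∀ (f : ℝ → H) (h₀ : MemLp f 2 (wMeasure ν₀)) (h₁ : MemLp f 2 (wMeasure ν₁)),
      ⇑(M₀ (MemLp.toLp f h₀)) =ᵐ[volume] ⇑(M₁ (MemLp.toLp f h₁)) := by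
  intro f h₀ h₁
  have key : ∀ a : ℝ,
      (Set.Iic a).indicator ⇑(M₀ (h₀.toLp f)) =ᵐ[volume]
        (Set.Iic a).indicator ⇑(M₁ (h₁.toLp f)) := by
    intro a
    obtain ⟨u, hu, hconv⟩ := mem_closure_iff_seq_limit.mp (hdense (h₀.toLp f))
    choose φ hφD hφ using hu
    -- the approximants in L²(ν₁)
    set g1 : ℕ → Lp H 2 (wMeasure ν₁) := fun n => MemLp.toLp (φ n) (hD (φ n) (hφD n)).2
      with hg1
    -- truncated approximants in L²(ν₁)
    set v : ℕ → Lp H 2 (wMeasure ν₁) := fun n =>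
      MemLp.toLp ((Set.Iic a).indicator (φ n))
        (((hD (φ n) (hφD n)).2).indicator measurableSet_Iic) with hv
    set vL : Lp H 2 (wMeasure ν₁) :=
      MemLp.toLp ((Set.Iic a).indicator f) (h₁.indicator measurableSet_Iic) with hvL
    -- convergence on the ν₀ side
    have hAconv : Tendsto (fun n => trunc ν₀ a (M₀ (u n))) atTop
        (𝓝 (trunc ν₀ a (M₀ (h₀.toLp f)))) :=
      ((trunc_continuous ν₀ a).tendsto _).comp ((M₀.continuous.tendsto _).comp hconv)
    -- ℒ² convergence of φ n to f in ν₀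
    have h0conv : Tendsto (fun n => eLpNorm (φ n - f) 2 (wMeasure ν₀)) atTop (𝓝 0) := by
      rw [← Lp.tendsto_Lp_iff_tendsto_eLpNorm'' _ (fun n => (hD (φ n) (hφD n)).1) f h₀]
      have hfun : (fun n => ((hD (φ n) (hφD n)).1).toLp (φ n)) = u :=
        funext fun n => (hφ n).symm
      rw [hfun]
      exact hconv
    -- convergence of truncated approximants in ν₁
    have hvconv : Tendsto v atTop (𝓝 vL) := by
      rw [hv, hvL, Lp.tendsto_Lp_iff_tendsto_eLpNorm'']
      set C := (ENNReal.ofReal (Real.exp (2 * (ν₀ - ν₁) * a))) ^ (1 / (2:ℝ≥0∞)).toReal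
        with hC
      have hCne : C ≠ ∞ := by
        rw [hC]
        exact ENNReal.rpow_ne_top_of_nonneg (by positivity) ENNReal.ofReal_ne_top
      have hb : ∀ n, eLpNorm ((Set.Iic a).indicator (φ n) - (Set.Iic a).indicator f) 2
          (wMeasure ν₁) ≤ C * eLpNorm (φ n - f) 2 (wMeasure ν₀) := by
        intro n
        have hind : (Set.Iic a).indicator (φ n) - (Set.Iic a).indicator f
            = (Set.Iic a).indicator (φ n - f) := by
          ext t
          by_cases h : t ∈ Set.Iic a <;> simp [h]
        rw [hind]
        exact cross_bound ν₀ ν₁ a hν₀₁ _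
      have hupper : Tendsto (fun n => C * eLpNorm (φ n - f) 2 (wMeasure ν₀)) atTop
          (𝓝 0) := by
        have := ENNReal.Tendsto.const_mul (a := C) h0conv (Or.inr hCne)
        simpa using this
      exact tendsto_of_tendsto_of_tendsto_of_le_of_le tendsto_const_nhds hupper
        (fun n => zero_le) hb
    have hBconv : Tendsto (fun n => trunc ν₁ a (M₁ (v n))) atTop
        (𝓝 (trunc ν₁ a (M₁ vL))) :=
      ((trunc_continuous ν₁ a).tendsto _).comp ((M₁.continuous.tendsto _).comp hvconv)
    -- causality identifications
    have hv_eq : ∀ n, v n = trunc ν₁ a (g1 n) := fun n => (trunc_toLp ν₁ a _).symm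
    have hB_eq : ∀ n, trunc ν₁ a (M₁ (v n)) = trunc ν₁ a (M₁ (g1 n)) := by
      intro n
      rw [hv_eq n, ← trunc_causal_eq ν₁ a M₁ (hM₁causal a) (g1 n)]
    have hvL_eq : vL = trunc ν₁ a (h₁.toLp f) := (trunc_toLp ν₁ a h₁).symm
    have hBL_eq : trunc ν₁ a (M₁ vL) = trunc ν₁ a (M₁ (h₁.toLp f)) := by
      rw [hvL_eq, ← trunc_causal_eq ν₁ a M₁ (hM₁causal a) (h₁.toLp f)]
    -- per-n agreement a.e. w.r.t. volume
    have hAB : ∀ n, ⇑(trunc ν₀ a (M₀ (u n))) =ᵐ[volume] ⇑(trunc ν₁ a (M₁ (v n))) := by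
      intro n
      rw [hB_eq n, hφ n]
      have h01 := hagree (φ n) (hφD n)
      filter_upwards [coeFn_trunc_vol ν₀ a (M₀ (MemLp.toLp (φ n) (hD (φ n) (hφD n)).1)),
        coeFn_trunc_vol ν₁ a (M₁ (g1 n)), h01] with t ht0 ht1 ht01
      rw [ht0, ht1]
      by_cases h : t ∈ Set.Iic a <;> simp [Set.indicator_apply, h, hg1, ht01]
    -- subsequence extraction
    have tmA : TendstoInMeasure (wMeasure ν₀) (fun n => ⇑(trunc ν₀ a (M₀ (u n)))) atTop
        ⇑(trunc ν₀ a (M₀ (h₀.toLp f))) := tendstoInMeasure_of_tendsto_Lp hAconv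
    obtain ⟨ns, hns_mono, hns⟩ := tmA.exists_seq_tendsto_ae
    have hBconv' : Tendsto (fun i => trunc ν₁ a (M₁ (v (ns i)))) atTop
        (𝓝 (trunc ν₁ a (M₁ vL))) := hBconv.comp hns_mono.tendsto_atTop
    have tmB : TendstoInMeasure (wMeasure ν₁) (fun i => ⇑(trunc ν₁ a (M₁ (v (ns i)))))
        atTop ⇑(trunc ν₁ a (M₁ vL)) := tendstoInMeasure_of_tendsto_Lp hBconv'
    obtain ⟨ms, hms_mono, hms⟩ := tmB.exists_seq_tendsto_ae
    -- pass everything to volume and combine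
    have hnsv : ∀ᵐ t ∂(volume : Measure ℝ),
        Tendsto (fun i => (trunc ν₀ a (M₀ (u (ns i)))) t) atTop
          (𝓝 ((trunc ν₀ a (M₀ (h₀.toLp f))) t)) := hns.filter_mono (volume_ac ν₀).ae_le
    have hmsv : ∀ᵐ t ∂(volume : Measure ℝ),
        Tendsto (fun i => (trunc ν₁ a (M₁ (v (ns (ms i))))) t) atTop
          (𝓝 ((trunc ν₁ a (M₁ vL)) t)) := hms.filter_mono (volume_ac ν₁).ae_le
    have hfinal : ⇑(trunc ν₀ a (M₀ (h₀.toLp f))) =ᵐ[volume] ⇑(trunc ν₁ a (M₁ vL)) := by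
      filter_upwards [hnsv, hmsv, ae_all_iff.mpr hAB] with t h1 h2 h3
      have h1' : Tendsto (fun i => (trunc ν₀ a (M₀ (u (ns (ms i))))) t) atTop
          (𝓝 ((trunc ν₀ a (M₀ (h₀.toLp f))) t)) := h1.comp hms_mono.tendsto_atTop
      have h1'' : Tendsto (fun i => (trunc ν₁ a (M₁ (v (ns (ms i))))) t) atTop
          (𝓝 ((trunc ν₀ a (M₀ (h₀.toLp f))) t)) := by
        refine h1'.congr fun i => ?_
        exact h3 (ns (ms i))
      exact tendsto_nhds_unique h1'' h2
    -- conclude key a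
    calc (Set.Iic a).indicator ⇑(M₀ (h₀.toLp f))
        =ᵐ[volume] ⇑(trunc ν₀ a (M₀ (h₀.toLp f))) := (coeFn_trunc_vol ν₀ a _).symm
      _ =ᵐ[volume] ⇑(trunc ν₁ a (M₁ vL)) := hfinal
      _ =ᵐ[volume] ⇑(trunc ν₁ a (M₁ (h₁.toLp f))) := by rw [hBL_eq]
      _ =ᵐ[volume] (Set.Iic a).indicator ⇑(M₁ (h₁.toLp f)) := coeFn_trunc_vol ν₁ a _
  -- combine over a = n ∈ ℕ
  filter_upwards [ae_all_iff.mpr fun n : ℕ => key n] with t ht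
  obtain ⟨n, hn⟩ := exists_nat_ge t
  have h := ht n
  rwa [Set.indicator_of_mem (show t ∈ Set.Iic (n:ℝ) from hn),
    Set.indicator_of_mem (show t ∈ Set.Iic (n:ℝ) from hn)] at h
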